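/- Let b∈ℝ, let U⊆ℂ be an open convex set containing 0 and a point α≠0, let g:U→ℂ be holomorphic, set B₀=(g(α)−g(0))/α, let G₀ be the unique holomorphic function on U with g(u)=g(α)+B₀(u−α)+u(u−α)G₀(u), and define g₁(u)=b·G₀(u)+u·G₀′(u). Then g₁(0) = (b/α)·(B₀ − g′(0)) and g₁(α) = ((1−b)/α)·(B₀ − g′(α)) + g″(α)/2. -/

import Mathlib

open Complex Set

/-- Values (A.2), (A.3): with `B₀ = (g(α)-g(0))/α`, `G₀` the Bleistein remainder of `g`, and
`g₁(u) = b G₀(u) + u G₀'(u)`, one has `g₁(0) = (b/α)(B₀ - g'(0))` and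
`g₁(α) = ((1-b)/α)(B₀ - g'(α)) + g''(α)/2`. -/
theorem bleistein_g1_values (b : ℝ) (U : Set ℂ) (hU : IsOpen U) (hconv : Convex ℝ U)
    (α : ℂ) (h0 : (0 : ℂ) ∈ U) (hα : α ∈ U) (hα0 : α ≠ 0)
    (g G₀ : ℂ → ℂ) (hg : DifferentiableOn ℂ g U) (hG₀ : DifferentiableOn ℂ G₀ U)
    (hdecomp : ∀ u ∈ U,
      g u = g α + (g α - g 0) / α * (u - α) + u * (u - α) * G₀ u) :
    (b : ℂ) * G₀ 0 + 0 * deriv G₀ 0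
        = (b / α) * ((g α - g 0) / α - deriv g 0) ∧
    (b : ℂ) * G₀ α + α * deriv G₀ α
        = ((1 - b) / α) * ((g α - g 0) / α - deriv g α) + iteratedDeriv 2 g α / 2 := by
  set B₀ : ℂ := (g α - g 0) / α with hB
  have hG₀d : ∀ x ∈ U, DifferentiableAt ℂ G₀ x := fun x hx =>
    hG₀.differentiableAt (hU.mem_nhds hx)
  -- derivative formula for g on U
  have key : ∀ x ∈ U, HasDerivAt g
      (B₀ + ((2 * x - α) * G₀ x + x * (x - α) * deriv G₀ x)) x := by
    intro x hx
    have hG' := (hG₀d x hx).hasDerivAt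
    have h2 : HasDerivAt (fun u => u * (u - α) * G₀ u)
        ((1 * (x - α) + x * 1) * G₀ x + x * (x - α) * deriv G₀ x) x :=
      ((hasDerivAt_id x).mul ((hasDerivAt_id x).sub_const α)).mul hG'
    have h3 : HasDerivAt (fun u => g α + B₀ * (u - α) + u * (u - α) * G₀ u)
        (0 + B₀ * 1 + ((1 * (x - α) + x * 1) * G₀ x + x * (x - α) * deriv G₀ x)) x :=
      ((hasDerivAt_const x (g α)).add
        (((hasDerivAt_id x).sub_const α).const_mul B₀)).add h2
    have hev : g =ᶠ[nhds x] fun u => g α + B₀ * (u - α) + u * (u - α) * G₀ u :=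
      Filter.eventuallyEq_of_mem (hU.mem_nhds hx) fun u hu => hdecomp u hu
    have := h3.congr_of_eventuallyEq hev
    exact this.congr_deriv (by ring)
  have hd0 : deriv g 0 = B₀ - α * G₀ 0 := by
    have := (key 0 h0).deriv
    rw [this]; ring
  have hdα : deriv g α = B₀ + α * G₀ α := by
    have := (key α hα).deriv
    rw [this]; ring
  -- second derivative at α
  have hG'' : DifferentiableAt ℂ (deriv G₀) α :=
    (((hG₀.analyticOnNhd hU).deriv α hα).differentiableAt)
  have h2d : deriv (deriv g) α = 2 * G₀ α + 2 * α * deriv G₀ α := by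
    have hev : deriv g =ᶠ[nhds α]
        fun u => B₀ + ((2 * u - α) * G₀ u + u * (u - α) * deriv G₀ u) :=
      Filter.eventuallyEq_of_mem (hU.mem_nhds hα) fun u hu => (key u hu).deriv
    rw [hev.deriv_eq]
    have hG' := (hG₀d α hα).hasDerivAt
    have hG2 := hG''.hasDerivAt
    have t2 : HasDerivAt (fun u => (2 * u - α) * G₀ u)
        (2 * 1 * G₀ α + (2 * α - α) * deriv G₀ α) α :=
      (((hasDerivAt_id α).const_mul 2).sub_const α).mul hG'
    have t3 : HasDerivAt (fun u => u * (u - α) * deriv G₀ u)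
        ((1 * (α - α) + α * 1) * deriv G₀ α + α * (α - α) * deriv (deriv G₀) α) α :=
      ((hasDerivAt_id α).mul ((hasDerivAt_id α).sub_const α)).mul hG2
    have h4 : HasDerivAt
        (fun u => B₀ + ((2 * u - α) * G₀ u + u * (u - α) * deriv G₀ u))
        (0 + ((2 * 1 * G₀ α + (2 * α - α) * deriv G₀ α) +
          ((1 * (α - α) + α * 1) * deriv G₀ α + α * (α - α) * deriv (deriv G₀) α))) α :=
      (hasDerivAt_const α B₀).add (t2.add t3)
    rw [h4.deriv]; ring
  have hiter : iteratedDeriv 2 g α = 2 * G₀ α + 2 * α * deriv G₀ α := by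
    rw [iteratedDeriv_succ, iteratedDeriv_one, h2d]
  constructor
  · rw [hd0]
    field_simp
    ring
  · rw [hdα, hiter]
    field_simp
    ring
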